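/- In a 2-edge-connected graph G with diameter D, for any edge e = {u,v} and any two vertices x,y whose shortest path in G uses e, there is a path from x to y in G - e of length at most 2D. Consequently, distances in G - e are at most 2D. -/

import Mathlib

open SimpleGraph

section Aux

variable {V : Type*} {G : SimpleGraph V}

/-- Split a walk at an occurrence of an edge. -/
private lemma walk_split_at_edge {x y : V} (e : Sym2 V) (p : G.Walk x y) (he : e ∈ p.edges) :
    ∃ (u v : V) (h : G.Adj u v) (p1 : G.Walk x u) (p2 : G.Walk v y),
      e = s(u, v) ∧ p = p1.append (SimpleGraph.Walk.cons h p2) := by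
  induction p with
  | nil => simp at he
  | @cons a b c h q ih =>
    rw [SimpleGraph.Walk.edges_cons, List.mem_cons] at he
    rcases he with he | he
    · exact ⟨a, b, h, SimpleGraph.Walk.nil, q, he, rfl⟩
    · obtain ⟨u, v, h', p1, p2, heq, hq⟩ := ih he
      exact ⟨u, v, h', SimpleGraph.Walk.cons h p1, p2, heq, by rw [hq]; rfl⟩

private lemma exists_walk_to_getVert {x y : V} (w : G.Walk x y) (i : ℕ) :
    ∃ w1 : G.Walk x (w.getVert i), w1.length ≤ i := by
  induction w generalizing i with
  | nil => exact ⟨(SimpleGraph.Walk.nil).copy rfl (by simp [SimpleGraph.Walk.getVert]), by simp⟩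
  | @cons a b c h q ih =>
    cases i with
    | zero => exact ⟨(SimpleGraph.Walk.nil).copy rfl (by simp), by simp⟩
    | succ i =>
      obtain ⟨w1, hw1⟩ := ih i
      exact ⟨(SimpleGraph.Walk.cons h w1).copy rfl
        (by rw [SimpleGraph.Walk.getVert_cons_succ]), by simpa using Nat.succ_le_succ hw1⟩

private lemma exists_walk_from_getVert {x y : V} (w : G.Walk x y) (i : ℕ) (hi : i ≤ w.length) :
    ∃ w2 : G.Walk (w.getVert i) y, w2.length + i = w.length := by
  induction w generalizing i with
  | nil =>
    simp only [SimpleGraph.Walk.length_nil, Nat.le_zero] at hi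
    subst hi
    exact ⟨(SimpleGraph.Walk.nil).copy (by simp [SimpleGraph.Walk.getVert]) rfl, by simp⟩
  | @cons a b c h q ih =>
    cases i with
    | zero =>
      exact ⟨(SimpleGraph.Walk.cons h q).copy (by simp) rfl, by simp⟩
    | succ i =>
      simp only [SimpleGraph.Walk.length_cons] at hi
      obtain ⟨w2, hw2⟩ := ih i (Nat.le_of_succ_le_succ hi)
      refine ⟨w2.copy (by rw [SimpleGraph.Walk.getVert_cons_succ]) rfl, ?_⟩
      simp only [SimpleGraph.Walk.length_copy, SimpleGraph.Walk.length_cons]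
      omega

/-- Key local lemma: for any vertex `m`, either the `G-e` distance from `x` to `m` is at
most `D`, or one of the endpoints of `e` is close to `m` in `G - e`. -/
private lemma lemA {D a : ℕ} (hconn : G.Connected)
    (hdiam : ∀ x y : V, G.dist x y ≤ D) {u v x : V}
    (hxu : G.dist x u = a) (hxv : G.dist x v = a + 1) (m : V) :
    (G.deleteEdges {s(u, v)}).dist x m ≤ D ∨
    (G.deleteEdges {s(u, v)}).dist v m + a + 1 ≤ D ∨
    (G.deleteEdges {s(u, v)}).dist u m + a + 2 ≤ D := by
  classical
  obtain ⟨W0, hW0⟩ := hconn.exists_walk_length_eq_dist x m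
  set W := W0.bypass with hWdef
  have hWp : W.IsPath := W0.bypass_isPath
  have hWlen : W.length = G.dist x m :=
    le_antisymm (hW0 ▸ W0.length_bypass_le) (SimpleGraph.dist_le W)
  by_cases hmem : s(u, v) ∈ W.edges
  · -- W uses the edge; split.
    obtain ⟨u', v', hadj, W1, W2, heq, hW⟩ := walk_split_at_edge _ W hmem
    have hWlen2 : W.length = W1.length + 1 + W2.length := by
      rw [hW]; simp [SimpleGraph.Walk.length_append]; omega
    have hnd : (W1.edges ++ (s(u', v') :: W2.edges)).Nodup := by
      have := hWp.edges_nodup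
      rw [hW] at this
      simpa [SimpleGraph.Walk.edges_append] using this
    have he2 : s(u, v) ∉ W2.edges := by
      rw [heq]
      exact (List.nodup_cons.mp (List.nodup_append.mp hnd).2.1).1
    have hd2 : (G.deleteEdges {s(u, v)}).dist v' m ≤ W2.length := by
      have := SimpleGraph.dist_le (W2.toDeleteEdges {s(u, v)}
        (fun f hf => by simp; rintro rfl; exact he2 hf))
      simpa [SimpleGraph.Walk.length_transfer] using this
    have hDm : G.dist x m ≤ D := hdiam x m
    rcases Sym2.eq_iff.mp heq with ⟨h1, h2⟩ | ⟨h1, h2⟩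
    · -- u' = u, v' = v
      subst h1; subst h2
      have hxu' : a ≤ W1.length := hxu ▸ SimpleGraph.dist_le W1
      right; left
      omega
    · -- u' = v, v' = u
      subst h1; subst h2
      have hxv' : a + 1 ≤ W1.length := hxv ▸ SimpleGraph.dist_le W1
      right; right
      omega
  · left
    have := SimpleGraph.dist_le (W.toDeleteEdges {s(u, v)}
      (fun f hf => by simp; rintro rfl; exact hmem hf))
    calc (G.deleteEdges {s(u, v)}).dist x m ≤ W.length := by
          simpa [SimpleGraph.Walk.length_transfer] using this
      _ ≤ D := hWlen ▸ hdiam x m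

end Aux

/-- In a 2-edge-connected finite graph `G` of diameter `D`: for any edge `e` and any two
vertices `x`, `y` such that some shortest `x`–`y` path in `G` uses `e`, there is a path from
`x` to `y` in `G - e` of length at most `2 * D`; consequently all distances in `G - e` are
at most `2 * D`. -/
theorem exists_short_path_in_deleteEdge {V : Type*} [Fintype V] (G : SimpleGraph V)
    (D : ℕ) (hconn : G.Connected) (hdiam : ∀ x y : V, G.dist x y ≤ D)
    (h2ec : ∀ e ∈ G.edgeSet, (G.deleteEdges {e}).Connected)
    (e : Sym2 V) (he : e ∈ G.edgeSet) :
    (∀ x y : V, ∀ p : G.Walk x y, p.IsPath → p.length = G.dist x y → e ∈ p.edges →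
      ∃ q : (G.deleteEdges {e}).Walk x y, q.IsPath ∧ q.length ≤ 2 * D) ∧
    (∀ x y : V, (G.deleteEdges {e}).dist x y ≤ 2 * D) := by
  classical
  have hG' : (G.deleteEdges {e}).Connected := h2ec e he
  have key : ∀ x y : V, ∀ p : G.Walk x y, p.IsPath → p.length = G.dist x y → e ∈ p.edges →
      ∃ q : (G.deleteEdges {e}).Walk x y, q.IsPath ∧ q.length ≤ 2 * D := by
    intro x y p hp hlen hmem
    obtain ⟨u, v, hadj, p1, p2, heq, hpeq⟩ := walk_split_at_edge e p hmem
    subst heq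
    set G' := G.deleteEdges {s(u, v)} with hG'def
    set a := p1.length with hadef
    set b := p2.length with hbdef
    have hlen' : a + 1 + b = G.dist x y := by
      rw [← hlen, hpeq]
      simp [SimpleGraph.Walk.length_append]
      omega
    have hd1 : G.dist x u ≤ a := SimpleGraph.dist_le p1
    have hd2 : G.dist v y ≤ b := SimpleGraph.dist_le p2
    have hd3 : G.dist x v ≤ a + 1 := by
      have := SimpleGraph.dist_le (p1.append (SimpleGraph.Walk.cons hadj SimpleGraph.Walk.nil))
      simpa [SimpleGraph.Walk.length_append] using this
    have hd4 : G.dist u y ≤ b + 1 := by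
      have := SimpleGraph.dist_le (SimpleGraph.Walk.cons hadj p2)
      simpa using this
    have h1 : G.dist x u = a := by
      have := hconn.dist_triangle (u := x) (v := u) (w := y)
      omega
    have h2 : G.dist x v = a + 1 := by
      have := hconn.dist_triangle (u := x) (v := v) (w := y)
      omega
    have h3 : G.dist y v = b := by rw [SimpleGraph.dist_comm]
                                   have := hconn.dist_triangle (u := x) (v := v) (w := y)
                                   omega
    have h4 : G.dist y u = b + 1 := by
      rw [SimpleGraph.dist_comm]
      have := hconn.dist_triangle (u := x) (v := u) (w := y)
      omega
    -- the two halves avoid the edge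
    have hnd : (p1.edges ++ (s(u, v) :: p2.edges)).Nodup := by
      have := hp.edges_nodup
      rw [hpeq] at this
      simpa [SimpleGraph.Walk.edges_append] using this
    obtain ⟨h1n, h2n, hdisj⟩ := List.nodup_append'.mp hnd
    have hep1 : s(u, v) ∉ p1.edges := fun hc => hdisj hc List.mem_cons_self
    have hep2 : s(u, v) ∉ p2.edges := (List.nodup_cons.mp h2n).1
    have hd1' : G'.dist x u ≤ a := by
      have := SimpleGraph.dist_le (p1.toDeleteEdges {s(u, v)}
        (fun f hf => by simp; rintro rfl; exact hep1 hf))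
      simpa [SimpleGraph.Walk.length_transfer] using this
    have hd2' : G'.dist v y ≤ b := by
      have := SimpleGraph.dist_le (p2.toDeleteEdges {s(u, v)}
        (fun f hf => by simp; rintro rfl; exact hep2 hf))
      simpa [SimpleGraph.Walk.length_transfer] using this
    have hG'c : G'.Connected := hG'
    set L := G'.dist x y with hLdef
    have hL : L ≤ 2 * D := by
      by_contra hL
      push_neg at hL
      obtain ⟨Q, hQ⟩ := hG'c.exists_walk_length_eq_dist x y
      have hQL : Q.length = L := hQ
      have haD : a + 1 + b ≤ D := hlen' ▸ hdiam x y
      -- first marked vertex, at position L - D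
      obtain ⟨w2, hw2⟩ := exists_walk_from_getVert Q (L - D) (by omega)
      obtain ⟨w1, hw1⟩ := exists_walk_to_getVert Q (L - D)
      have hP1y : G'.dist (Q.getVert (L - D)) y ≤ D := by
        have := SimpleGraph.dist_le w2
        omega
      have hxP1le : G'.dist x (Q.getVert (L - D)) ≤ L - D := le_trans (SimpleGraph.dist_le w1) hw1
      have htri1 := hG'c.dist_triangle (u := x) (v := (Q.getVert (L - D))) (w := y)
      have hxP1ge : D + 1 ≤ G'.dist x (Q.getVert (L - D)) := by omega
      have hP1yge : D ≤ G'.dist (Q.getVert (L - D)) y := by omega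
      have hcomm1 : G'.dist (Q.getVert (L - D)) v = G'.dist v (Q.getVert (L - D)) := SimpleGraph.dist_comm
      have htri1' := hG'c.dist_triangle (u := (Q.getVert (L - D))) (v := v) (w := y)
      have htri1'' := hG'c.dist_triangle (u := x) (v := u) (w := (Q.getVert (L - D)))
      have hab : a + 1 ≤ b := by
        have hres1 := lemA hconn hdiam h1 h2 (Q.getVert (L - D))
        rw [← hG'def] at hres1
        rcases hres1 with h | h | h <;> omega
      -- second marked vertex, at position D
      obtain ⟨w2', hw2'⟩ := exists_walk_from_getVert Q D (by omega)
      obtain ⟨w1', hw1'⟩ := exists_walk_to_getVert Q D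
      have hP2y : G'.dist (Q.getVert D) y ≤ L - D := by
        have := SimpleGraph.dist_le w2'
        omega
      have hxP2le : G'.dist x (Q.getVert D) ≤ D := le_trans (SimpleGraph.dist_le w1') hw1'
      have htri2 := hG'c.dist_triangle (u := x) (v := (Q.getVert D)) (w := y)
      have hxP2ge : D ≤ G'.dist x (Q.getVert D) := by omega
      have hP2yge : D + 1 ≤ G'.dist (Q.getVert D) y := by omega
      have hcomm2 : G'.dist y (Q.getVert D) = G'.dist (Q.getVert D) y := SimpleGraph.dist_comm
      have hcomm3 : G'.dist (Q.getVert D) v = G'.dist v (Q.getVert D) := SimpleGraph.dist_comm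
      have hcomm4 : G'.dist (Q.getVert D) u = G'.dist u (Q.getVert D) := SimpleGraph.dist_comm
      have htri2' := hG'c.dist_triangle (u := x) (v := u) (w := (Q.getVert D))
      have htri2'' := hG'c.dist_triangle (u := (Q.getVert D)) (v := v) (w := y)
      have hswap : s(v, u) = s(u, v) := Sym2.eq_swap
      have hres := lemA hconn hdiam h3 h4 (Q.getVert D)
      rw [hswap, ← hG'def] at hres
      rcases hres with h | h | h <;> omega
    obtain ⟨Q, hQ⟩ := hG'c.exists_walk_length_eq_dist x y
    refine ⟨Q.bypass, Q.bypass_isPath, ?_⟩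
    calc Q.bypass.length ≤ Q.length := Q.length_bypass_le
      _ ≤ 2 * D := by omega
  refine ⟨key, ?_⟩
  intro x y
  obtain ⟨p0, hp0⟩ := hconn.exists_walk_length_eq_dist x y
  set p := p0.bypass with hpdef
  have hp : p.IsPath := p0.bypass_isPath
  have hplen : p.length = G.dist x y :=
    le_antisymm (hp0 ▸ p0.length_bypass_le) (SimpleGraph.dist_le p)
  by_cases hmem : e ∈ p.edges
  · obtain ⟨q, hq, hqlen⟩ := key x y p hp hplen hmem
    exact le_trans (SimpleGraph.dist_le q) hqlen
  · have := SimpleGraph.dist_le (p.toDeleteEdges {e}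
      (fun f hf => by simp; rintro rfl; exact hmem hf))
    have hle : (G.deleteEdges {e}).dist x y ≤ p.length := by
      simpa [SimpleGraph.Walk.length_transfer] using this
    have := hdiam x y
    omega
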